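/- Let S be a finite set with |S| = m ≥ 2 and let τ be a permutation of S that is d-regular for some divisor d of m. Then the number of permutations σ of S that are a single cycle of length m on S and satisfy τ ∘ σ ∘ τ⁻¹ = σ equals φ(d) · (m/d − 1)! · d^{m/d − 1}, where φ is Euler's totient function. -/

import Mathlib

/-- The length of the orbit of `x` under the cyclic group generated by the permutation `τ`. -/
noncomputable def orbitLen {α : Type*} (τ : Equiv.Perm α) (x : α) : ℕ :=
  ({y | ∃ k : ℕ, (τ ^ k) x = y}).ncard

/-- A permutation is `d`-regular if every one of its orbits (cycles, counting fixed points as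
cycles of length 1) has cardinality exactly `d`. -/
def IsRegularPerm {α : Type*} (τ : Equiv.Perm α) (d : ℕ) : Prop :=
  ∀ x : α, orbitLen τ x = d

set_option linter.unusedSectionVars false
set_option linter.unusedVariables false

open Equiv Function Finset

namespace CFR

open Equiv Function Finset

lemma orbitLen_eq_minimalPeriod {α : Type*} [Finite α] (τ : Equiv.Perm α) (x : α) :
    orbitLen τ x = Function.minimalPeriod (⇑τ) x := by
  classical
  have hpp : x ∈ periodicPts (⇑τ) := by
    refine ⟨orderOf τ, ?_, ?_⟩
    · exact orderOf_pos τ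
    · show (⇑τ)^[orderOf τ] x = x
      rw [Equiv.Perm.iterate_eq_pow, pow_orderOf_eq_one]; rfl
  have hp : 0 < Function.minimalPeriod (⇑τ) x := minimalPeriod_pos_of_mem_periodicPts hpp
  have hset : {y | ∃ k : ℕ, (τ ^ k) x = y}
      = (fun k => (⇑τ)^[k] x) '' Set.Iio (Function.minimalPeriod (⇑τ) x) := by
    ext y
    constructor
    · rintro ⟨k, rfl⟩
      exact ⟨k % _, Nat.mod_lt _ hp, by
        show (⇑τ)^[k % _] x = _
        rw [Function.iterate_mod_minimalPeriod_eq, Equiv.Perm.iterate_eq_pow]⟩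
    · rintro ⟨k, _, rfl⟩
      exact ⟨k, by rw [← Equiv.Perm.iterate_eq_pow]⟩
  rw [orbitLen, hset, Set.ncard_image_of_injOn Function.iterate_injOn_Iio_minimalPeriod,
    ← Finset.coe_range, Set.ncard_coe_finset, Finset.card_range]

lemma pow_eq_one_of_period {α : Type*} {τ : Equiv.Perm α} {d : ℕ}
    (hper : ∀ x, Function.minimalPeriod (⇑τ) x = d) : τ ^ d = 1 := by
  ext x
  have h := Function.isPeriodicPt_minimalPeriod (⇑τ) x
  rw [hper x] at h
  have : (⇑τ)^[d] x = x := h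
  rw [Equiv.Perm.iterate_eq_pow] at this
  simpa using this

lemma pow_mod_eq {α : Type*} {τ : Equiv.Perm α} {d : ℕ} (h1 : τ ^ d = 1) (k : ℕ) :
    τ ^ k = τ ^ (k % d) := by
  conv_lhs => rw [← Nat.div_add_mod k d]
  rw [pow_add, pow_mul, h1, one_pow, one_mul]


section Wreath


variable {ι : Type*} [Fintype ι] [DecidableEq ι] {d : ℕ} [NeZero d]

/-- The wreath-product permutation `(q, x) ↦ (π q, x + a q)`. -/
def Fc (π : Equiv.Perm ι) (a : ι → ZMod d) : Equiv.Perm (ι × ZMod d) :=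
  π.prodShear fun q => Equiv.addRight (a q)

@[simp] lemma Fc_apply (π : Equiv.Perm ι) (a : ι → ZMod d) (q : ι) (x : ZMod d) :
    Fc π a (q, x) = (π q, x + a q) := rfl

lemma Fc_pow (π : Equiv.Perm ι) (a : ι → ZMod d) (k : ℕ) (q : ι) (x : ZMod d) :
    (Fc π a ^ k) (q, x) = ((π ^ k) q, x + ∑ t ∈ range k, a ((π ^ t) q)) := by
  induction k generalizing q x with
  | zero => simp
  | succ k ih =>
    have h1 : (Fc π a ^ (k + 1)) (q, x) = (Fc π a ^ k) (π q, x + a q) := by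
      rw [pow_succ, Equiv.Perm.mul_apply, Fc_apply]
    have h2 : ∀ t, (π ^ t) (π q) = (π ^ (t + 1)) q := fun t => by
      rw [pow_succ, Equiv.Perm.mul_apply]
    rw [h1, ih]
    refine Prod.ext (h2 k) ?_
    show x + a q + ∑ t ∈ range k, a ((π ^ t) (π q)) = x + ∑ t ∈ range (k + 1), a ((π ^ t) q)
    simp only [h2]
    rw [Finset.sum_range_succ']
    simp only [pow_zero, Equiv.Perm.one_apply]
    ring

lemma sameCycle_of_pow {α : Type*} {σ : Equiv.Perm α} {x y : α} (k : ℕ) (h : (σ ^ k) x = y) :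
    σ.SameCycle x y := ⟨(k : ℤ), by simpa [zpow_natCast] using h⟩

lemma isCycleOn_univ_iff {α : Type*} {σ : Equiv.Perm α} :
    σ.IsCycleOn (Set.univ : Set α) ↔ ∀ x y : α, σ.SameCycle x y := by
  constructor
  · intro h x y; exact h.2 (Set.mem_univ x) (Set.mem_univ y)
  · intro h; exact ⟨σ.bijective.bijOn_univ, fun x _ y _ => h x y⟩

variable {π : Equiv.Perm ι} {a : ι → ZMod d}

lemma cyc_finset (hπ : π.IsCycleOn (Set.univ : Set ι)) :
    π.IsCycleOn ↑(Finset.univ : Finset ι) := by rw [Finset.coe_univ]; exact hπ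

lemma sum_orbit (hπ : π.IsCycleOn (Set.univ : Set ι)) (q : ι) :
    ∑ t ∈ range (Fintype.card ι), a ((π ^ t) q) = ∑ i, a i := by
  have hπ' := cyc_finset hπ
  have hinj : ∀ t ∈ range (Fintype.card ι), ∀ t' ∈ range (Fintype.card ι),
      (π ^ t) q = (π ^ t') q → t = t' := by
    intro t ht t' ht' h
    have h2 := (hπ'.pow_apply_eq_pow_apply (Finset.mem_univ q)).mp h
    rw [Finset.card_univ] at h2
    exact h2.eq_of_lt_of_lt (Finset.mem_range.mp ht) (Finset.mem_range.mp ht')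
  have himg : (range (Fintype.card ι)).image (fun t => (π ^ t) q) = Finset.univ := by
    apply Finset.eq_univ_of_card
    rw [Finset.card_image_of_injOn hinj, Finset.card_range]
  calc ∑ t ∈ range (Fintype.card ι), a ((π ^ t) q)
      = ∑ i ∈ (range (Fintype.card ι)).image (fun t => (π ^ t) q), a i :=
        (Finset.sum_image hinj).symm
    _ = ∑ i, a i := by rw [himg]

lemma pow_card_apply_self (hπ : π.IsCycleOn (Set.univ : Set ι)) (q : ι) :
    (π ^ Fintype.card ι) q = q := by
  have hπ' := cyc_finset hπ
  rw [(hπ'.pow_apply_eq (Finset.mem_univ q))]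
  rw [Finset.card_univ]

lemma Fc_pow_card_mul (hπ : π.IsCycleOn (Set.univ : Set ι)) (t : ℕ) (q : ι) (x : ZMod d) :
    (Fc π a ^ (Fintype.card ι * t)) (q, x) = (q, x + t • ∑ i, a i) := by
  induction t generalizing x with
  | zero => simp
  | succ t ih =>
    have h1 : (Fc π a ^ (Fintype.card ι * (t + 1))) (q, x)
        = (Fc π a ^ (Fintype.card ι * t)) ((Fc π a ^ Fintype.card ι) (q, x)) := by
      rw [Nat.mul_succ, pow_add, Equiv.Perm.mul_apply]
    have h2 : (Fc π a ^ Fintype.card ι) (q, x) = (q, x + ∑ i, a i) := by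
      rw [Fc_pow, sum_orbit hπ, pow_card_apply_self hπ]
    rw [h1, h2, ih, succ_nsmul]
    refine Prod.ext rfl ?_
    show x + ∑ i, a i + t • ∑ i, a i = x + (t • ∑ i, a i + ∑ i, a i)
    ring

lemma Fc_isCycleOn_iff [Nonempty ι] (π : Equiv.Perm ι) (a : ι → ZMod d) :
    (Fc π a).IsCycleOn (Set.univ : Set (ι × ZMod d)) ↔
      π.IsCycleOn (Set.univ : Set ι) ∧ IsUnit (∑ i, a i) := by
  constructor
  · intro hσ
    have hcycπ : π.IsCycleOn (Set.univ : Set ι) := by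
      rw [isCycleOn_univ_iff]
      intro q q'
      obtain ⟨k, hk⟩ := ((isCycleOn_univ_iff.mp hσ) (q, 0) (q', 0)).exists_pow_eq'
      rw [Fc_pow] at hk
      exact sameCycle_of_pow k (congrArg Prod.fst hk.2)
    refine ⟨hcycπ, ?_⟩
    obtain ⟨q₀⟩ := ‹Nonempty ι›
    obtain ⟨k, -, hk⟩ := ((isCycleOn_univ_iff.mp hσ) (q₀, 0) (q₀, 1)).exists_pow_eq'
    have hk1 : (π ^ k) q₀ = q₀ := by
      have := congrArg Prod.fst hk; rw [Fc_pow] at this; exact this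
    have hdvd : Fintype.card ι ∣ k := by
      have h2 := (cyc_finset hcycπ).pow_apply_eq (Finset.mem_univ q₀) (n := k)
      rw [Finset.card_univ] at h2
      exact h2.mp hk1
    obtain ⟨t, rfl⟩ := hdvd
    have h3 := Fc_pow_card_mul (a := a) hcycπ t q₀ 0
    rw [hk] at h3
    have h4 : t • ∑ i, a i = 1 := by
      have := congrArg Prod.snd h3; simpa using this.symm
    have h5 : (t : ZMod d) * ∑ i, a i = 1 := by
      rw [← h4, nsmul_eq_mul]
    exact IsUnit.of_mul_eq_one _ (by rw [mul_comm]; exact h5)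
  · rintro ⟨hπc, hs⟩
    rw [isCycleOn_univ_iff]
    rintro ⟨q, x⟩ ⟨q', x'⟩
    obtain ⟨k, -, hk⟩ := (cyc_finset hπc).exists_pow_eq (Finset.mem_univ q) (Finset.mem_univ q')
    set s : ZMod d := ∑ i, a i with hs'
    set S : ZMod d := ∑ t ∈ range k, a ((π ^ t) q) with hS
    set t : ℕ := ((x' - x - S) * ↑hs.unit⁻¹).val with ht
    refine sameCycle_of_pow (Fintype.card ι * t + k) ?_
    have h2 : (Fc π a ^ k) (q, x) = (q', x + S) := by
      rw [Fc_pow, hk]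
    rw [pow_add, Equiv.Perm.mul_apply, h2, Fc_pow_card_mul hπc]
    refine Prod.ext rfl ?_
    show x + S + t • s = x'
    have hts : (t : ZMod d) = (x' - x - S) * ↑hs.unit⁻¹ := ZMod.natCast_rightInverse _
    have hu : (↑hs.unit⁻¹ : ZMod d) * s = 1 := hs.val_inv_mul
    have h6 : t • s = x' - x - S := by
      rw [nsmul_eq_mul, hts, mul_assoc, hu, mul_one]
    rw [h6]; ring

lemma Fc_injective : Function.Injective (fun p : Equiv.Perm ι × (ι → ZMod d) => Fc p.1 p.2) := by
  rintro ⟨π, a⟩ ⟨π', a'⟩ h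
  simp only at h
  have h1 : ∀ q : ι, ((π q, (0 : ZMod d) + a q) : ι × ZMod d) = (π' q, 0 + a' q) := fun q => by
    rw [← Fc_apply, ← Fc_apply, h]
  have hπ : π = π' := Equiv.ext fun q => congrArg Prod.fst (h1 q)
  have ha : a = a' := funext fun q => by
    have := congrArg Prod.snd (h1 q); simpa using this
  rw [Prod.mk.injEq]; exact ⟨hπ, ha⟩

variable (ι d) in
/-- The standard `d`-regular permutation `(q, x) ↦ (q, x + 1)`. -/
def tau0 : Equiv.Perm (ι × ZMod d) := Fc 1 (fun _ => 1)

lemma tau0_pow (k : ℕ) (q : ι) (x : ZMod d) :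
    ((tau0 ι d) ^ k) (q, x) = (q, x + (k : ZMod d)) := by
  rw [tau0, Fc_pow]
  simp [Finset.sum_const, nsmul_eq_mul]

lemma commute_tau0_Fc (π : Equiv.Perm ι) (a : ι → ZMod d) : Commute (tau0 ι d) (Fc π a) := by
  apply Equiv.ext
  rintro ⟨q, x⟩
  show (tau0 ι d) (Fc π a (q, x)) = Fc π a ((tau0 ι d) (q, x))
  show ((π q, x + a q + 1) : ι × ZMod d) = (π q, x + 1 + a q)
  refine Prod.ext rfl ?_
  show x + a q + 1 = x + 1 + a q
  ring

lemma commute_exists (σ : Equiv.Perm (ι × ZMod d)) (h : Commute (tau0 ι d) σ) :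
    ∃ (π : Equiv.Perm ι) (a : ι → ZMod d), σ = Fc π a := by
  have key : ∀ (q : ι) (x : ZMod d), σ (q, x) = ((σ (q, 0)).1, (σ (q, 0)).2 + x) := by
    intro q x
    have h0 : ((q, x) : ι × ZMod d) = ((tau0 ι d) ^ x.val) (q, 0) := by
      rw [tau0_pow]
      refine Prod.ext rfl ?_
      show x = 0 + ((x.val : ℕ) : ZMod d)
      rw [zero_add, ZMod.natCast_rightInverse x]
    have hc := h.pow_left x.val
    have h2 : ((tau0 ι d ^ x.val) * σ) (q, 0) = (σ * (tau0 ι d ^ x.val)) (q, 0) := by rw [hc]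
    rw [Equiv.Perm.mul_apply, Equiv.Perm.mul_apply] at h2
    rw [h0, ← h2]
    have h3 : (tau0 ι d ^ x.val) (σ (q, 0))
        = ((σ (q, 0)).1, (σ (q, 0)).2 + ((x.val : ℕ) : ZMod d)) := by
      rw [← Prod.mk.eta (p := σ (q, 0)), tau0_pow]
    rw [h3, ZMod.natCast_rightInverse x]
  have hginj : Function.Injective (fun q => (σ (q, 0)).1) := by
    intro q q' hg
    simp only at hg
    have e1 := key q' ((σ (q, 0)).2 - (σ (q', 0)).2)
    have e2 := key q 0
    have e3 : σ (q', (σ (q, 0)).2 - (σ (q', 0)).2) = σ (q, 0) := by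
      rw [e1, e2, hg]
      refine Prod.ext rfl ?_
      ring
    have := σ.injective e3
    exact (congrArg Prod.fst this).symm
  refine ⟨Equiv.ofBijective _ (Finite.injective_iff_bijective.mp hginj),
    fun q => (σ (q, 0)).2, Equiv.ext ?_⟩
  rintro ⟨q, x⟩
  rw [key q x, Fc_apply]
  refine Prod.ext rfl ?_
  show (σ (q, 0)).2 + x = x + (σ (q, 0)).2
  ring

lemma setEq [Nonempty ι] :
    {σ : Equiv.Perm (ι × ZMod d) | σ.IsCycleOn Set.univ ∧ Commute (tau0 ι d) σ}
      = (fun p : Equiv.Perm ι × (ι → ZMod d) => Fc p.1 p.2) ''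
        {p : Equiv.Perm ι × (ι → ZMod d) |
          p.1.IsCycleOn Set.univ ∧ IsUnit (∑ i, p.2 i)} := by
  ext σ
  constructor
  · rintro ⟨hcyc, hcomm⟩
    obtain ⟨π, a, rfl⟩ := commute_exists σ hcomm
    obtain ⟨h1, h2⟩ := (Fc_isCycleOn_iff π a).mp hcyc
    exact ⟨(π, a), ⟨h1, h2⟩, rfl⟩
  · rintro ⟨⟨π, a⟩, ⟨h1, h2⟩, rfl⟩
    exact ⟨(Fc_isCycleOn_iff π a).mpr ⟨h1, h2⟩, commute_tau0_Fc π a⟩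


end Wreath
/-- `Equiv.permCongr` as a `MulEquiv`. -/
def permCongrMul {γ β : Type*} (e : γ ≃ β) : Equiv.Perm γ ≃* Equiv.Perm β :=
  { e.permCongr with
    map_mul' := fun p q => Equiv.ext fun x => by
      simp [Equiv.permCongr_apply, Equiv.Perm.mul_apply] }

@[simp] lemma permCongrMul_apply {γ β : Type*} (e : γ ≃ β) (p : Equiv.Perm γ) :
    permCongrMul e p = e.permCongr p := rfl

lemma isCycleOn_permCongr_of {γ β : Type*} {e : γ ≃ β} {σ : Equiv.Perm γ}
    (h : σ.IsCycleOn (Set.univ : Set γ)) :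
    (e.permCongr σ).IsCycleOn (Set.univ : Set β) := by
  rw [isCycleOn_univ_iff] at h ⊢
  intro x y
  obtain ⟨i, hi⟩ := h (e.symm x) (e.symm y)
  refine ⟨i, ?_⟩
  show ((e.permCongr σ) ^ i) x = y
  have : (e.permCongr σ) ^ i = e.permCongr (σ ^ i) := by
    rw [← permCongrMul_apply, ← permCongrMul_apply, map_zpow]
  rw [this, Equiv.permCongr_apply, hi, Equiv.apply_symm_apply]

lemma isCycleOn_permCongr {γ β : Type*} {e : γ ≃ β} {σ : Equiv.Perm γ} :
    (e.permCongr σ).IsCycleOn (Set.univ : Set β) ↔ σ.IsCycleOn (Set.univ : Set γ) := by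
  constructor
  · intro h
    have h2 := isCycleOn_permCongr_of (e := e.symm) h
    have h3 : e.symm.permCongr (e.permCongr σ) = σ := by
      apply Equiv.ext; intro x; simp [Equiv.permCongr_apply]
    rwa [h3] at h2
  · exact isCycleOn_permCongr_of

lemma addRight_one_pow (n : ℕ) (k : ℕ) (x : ZMod n) :
    ((Equiv.addRight (1 : ZMod n)) ^ k) x = x + (k : ZMod n) := by
  induction k generalizing x with
  | zero => simp
  | succ k ih =>
    rw [pow_succ, Equiv.Perm.mul_apply]
    show ((Equiv.addRight (1 : ZMod n)) ^ k) (x + 1) = _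
    rw [ih]
    push_cast
    ring

lemma addRight_one_isCycleOn (n : ℕ) [NeZero n] :
    (Equiv.addRight (1 : ZMod n)).IsCycleOn (Set.univ : Set (ZMod n)) := by
  rw [isCycleOn_univ_iff]
  intro x y
  refine sameCycle_of_pow (y - x).val ?_
  rw [addRight_one_pow, ZMod.natCast_rightInverse]
  ring

lemma pointed_formula {Q : Type*} [Fintype Q] [DecidableEq Q] [Nonempty Q] {q₀ : Q}
    (g : ZMod (Fintype.card Q) ≃ Q) (hg : g 0 = q₀) (k : ZMod (Fintype.card Q)) :
    ((g.permCongr (Equiv.addRight 1)) ^ k.val) q₀ = g k := by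
  haveI : NeZero (Fintype.card Q) := ⟨(Fintype.card_pos (α := Q)).ne'⟩
  have h1 : (g.permCongr (Equiv.addRight 1)) ^ k.val
      = g.permCongr ((Equiv.addRight (1 : ZMod (Fintype.card Q))) ^ k.val) := by
    rw [← permCongrMul_apply, ← permCongrMul_apply, map_pow]
  have h0 : g.symm q₀ = 0 := by rw [← hg, Equiv.symm_apply_apply]
  rw [h1, Equiv.permCongr_apply, h0, addRight_one_pow, zero_add, ZMod.natCast_rightInverse]

lemma card_cycles (Q : Type*) [Fintype Q] [DecidableEq Q] [Nonempty Q] :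
    Nat.card {π : Equiv.Perm Q // π.IsCycleOn (Set.univ : Set Q)}
      = (Fintype.card Q - 1).factorial := by
  classical
  obtain ⟨q₀⟩ := ‹Nonempty Q›
  haveI : NeZero (Fintype.card Q) := ⟨(Fintype.card_pos (α := Q)).ne'⟩
  have hΦbij : Function.Bijective (fun (g : {g : ZMod (Fintype.card Q) ≃ Q // g 0 = q₀}) =>
      (⟨g.1.permCongr (Equiv.addRight 1),
        isCycleOn_permCongr.mpr (addRight_one_isCycleOn _)⟩ :
        {π : Equiv.Perm Q // π.IsCycleOn (Set.univ : Set Q)})) := by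
    constructor
    · rintro ⟨g, hg⟩ ⟨g', hg'⟩ hΦ
      simp only [Subtype.mk.injEq] at hΦ
      refine Subtype.ext (Equiv.ext fun k => ?_)
      rw [← pointed_formula g hg k, ← pointed_formula g' hg' k, hΦ]
    · rintro ⟨π, hπ⟩
      have hinj : Function.Injective (fun k : ZMod (Fintype.card Q) => (π ^ k.val) q₀) := by
        intro k k' hk
        have h2 := ((cyc_finset hπ).pow_apply_eq_pow_apply (Finset.mem_univ q₀)).mp hk
        rw [Finset.card_univ] at h2
        exact ZMod.val_injective _ (h2.eq_of_lt_of_lt (ZMod.val_lt k) (ZMod.val_lt k'))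
      have hbij : Function.Bijective (fun k : ZMod (Fintype.card Q) => (π ^ k.val) q₀) :=
        (Fintype.bijective_iff_injective_and_card _).mpr ⟨hinj, by rw [ZMod.card]⟩
      set g := Equiv.ofBijective (fun k : ZMod (Fintype.card Q) => (π ^ k.val) q₀) hbij
        with hgdef
      have hg0 : g 0 = q₀ := by
        show (π ^ (0 : ZMod (Fintype.card Q)).val) q₀ = q₀
        rw [ZMod.val_zero, pow_zero]; rfl
      refine ⟨⟨g, hg0⟩, Subtype.ext (Equiv.ext fun y => ?_)⟩
      obtain ⟨k, rfl⟩ := g.surjective y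
      show (g.permCongr (Equiv.addRight 1)) (g k) = π (g k)
      rw [Equiv.permCongr_apply, Equiv.symm_apply_apply]
      show g (k + 1) = π (g k)
      show (π ^ (k + 1).val) q₀ = π ((π ^ k.val) q₀)
      have h3 : π ((π ^ k.val) q₀) = (π ^ (k.val + 1)) q₀ := by
        rw [pow_succ', Equiv.Perm.mul_apply]
      rw [h3]
      have h4 := (cyc_finset hπ).pow_apply_eq_pow_apply (a := q₀) (s := Finset.univ)
        (Finset.mem_univ q₀) (m := (k + 1).val) (n := k.val + 1)
      rw [Finset.card_univ] at h4
      apply h4.mpr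
      have h5 : ((k.val + 1 : ℕ) : ZMod (Fintype.card Q)) = k + 1 := by
        push_cast
        rw [ZMod.natCast_rightInverse]
      calc (k + 1).val = (((k.val + 1 : ℕ) : ZMod (Fintype.card Q))).val := by rw [h5]
        _ ≡ k.val + 1 [MOD (Fintype.card Q)] := by
            rw [ZMod.val_natCast]; exact Nat.mod_modEq _ _
  have E : (ZMod (Fintype.card Q) ≃ Q)
      ≃ (ZMod (Fintype.card Q) × {g : ZMod (Fintype.card Q) ≃ Q // g 0 = q₀}) :=
    { toFun := fun g => (g.symm q₀, ⟨(Equiv.addRight (g.symm q₀)).trans g, by simp⟩)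
      invFun := fun p => (Equiv.addRight p.1).symm.trans p.2.1
      left_inv := fun g => by ext k; simp
      right_inv := fun p => by
        have h0 : p.2.1.symm q₀ = 0 := by
          rw [Equiv.symm_apply_eq]; exact p.2.2.symm
        have h1 : ((Equiv.addRight p.1).symm.trans p.2.1).symm q₀ = p.1 := by
          simp [Equiv.symm_trans_apply, h0]
        refine Prod.ext h1 (Subtype.ext ?_)
        show (Equiv.addRight (((Equiv.addRight p.1).symm.trans p.2.1).symm q₀)).trans
            ((Equiv.addRight p.1).symm.trans p.2.1) = p.2.1
        rw [h1]
        ext k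
        simp }
  have hc1 : Nat.card (ZMod (Fintype.card Q) ≃ Q) = (Fintype.card Q).factorial := by
    rw [Nat.card_eq_fintype_card,
      Fintype.card_equiv (Fintype.equivOfCardEq (by rw [ZMod.card])), ZMod.card]
  have hc2 : Nat.card (ZMod (Fintype.card Q) ≃ Q)
      = Fintype.card Q * Nat.card {g : ZMod (Fintype.card Q) ≃ Q // g 0 = q₀} := by
    rw [Nat.card_congr E, Nat.card_prod, Nat.card_zmod]
  rw [← Nat.card_congr (Equiv.ofBijective _ hΦbij)]
  apply Nat.eq_of_mul_eq_mul_left (Fintype.card_pos (α := Q))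
  rw [← hc2, hc1, Nat.mul_factorial_pred Fintype.card_pos.ne']

lemma card_unit_sum (Q : Type*) [Fintype Q] [DecidableEq Q] [Nonempty Q] (d : ℕ) [NeZero d] :
    Nat.card {a : Q → ZMod d // IsUnit (∑ i, a i)}
      = d.totient * d ^ (Fintype.card Q - 1) := by
  classical
  obtain ⟨q₀⟩ := ‹Nonempty Q›
  have hsplit : ∀ c : Q → ZMod d, ∑ i, c i = c q₀ + ∑ q : {q : Q // q ≠ q₀}, c q.1 := by
    intro c
    rw [Fintype.sum_eq_add_sum_compl q₀]
    congr 1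
    rw [← Finset.sum_subtype (p := fun q => q ≠ q₀) ({q₀}ᶜ)
      (fun x => by simp) (fun q => c q)]
  have hval : ∀ (s : ZMod d) (b : {q : Q // q ≠ q₀} → ZMod d),
      ∑ i, (fun q => if h : q = q₀ then s - ∑ q', b q' else b ⟨q, h⟩) i = s := by
    intro s b
    rw [hsplit]
    show (if h : q₀ = q₀ then s - ∑ q', b q' else b ⟨q₀, h⟩)
        + (∑ q' : {q : Q // q ≠ q₀},
            if h : (q' : Q) = q₀ then s - ∑ q'', b q'' else b ⟨(q' : Q), h⟩) = s
    rw [dif_pos rfl, Finset.sum_congr rfl fun (q' : {q : Q // q ≠ q₀}) _ =>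
      (dif_neg q'.2 : (if h : (q' : Q) = q₀ then s - ∑ q'', b q'' else b ⟨(q' : Q), h⟩)
        = b ⟨(q' : Q), q'.2⟩)]
    simp only [Subtype.coe_eta]
    ring
  have E2 : {a : Q → ZMod d // IsUnit (∑ i, a i)}
      ≃ ({s : ZMod d // IsUnit s} × ({q : Q // q ≠ q₀} → ZMod d)) :=
    { toFun := fun a => (⟨∑ i, a.1 i, a.2⟩, fun q => a.1 q.1)
      invFun := fun p =>
        ⟨fun q => if h : q = q₀ then p.1.1 - ∑ q', p.2 q' else p.2 ⟨q, h⟩, by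
          rw [hval]; exact p.1.2⟩
      left_inv := fun a => by
        refine Subtype.ext (funext fun q => ?_)
        show (if h : q = q₀ then (∑ i, a.1 i) - ∑ q' : {q : Q // q ≠ q₀}, a.1 q'
          else a.1 q) = a.1 q
        by_cases h : q = q₀
        · rw [dif_pos h, hsplit a.1, h]
          ring
        · exact dif_neg h
      right_inv := fun p => by
        refine Prod.ext (Subtype.ext ?_) (funext fun q' => ?_)
        · exact hval p.1.1 p.2
        · exact dif_neg q'.2 }
  rw [Nat.card_congr E2, Nat.card_prod]
  have Eu : {s : ZMod d // IsUnit s} ≃ (ZMod d)ˣ :=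
    { toFun := fun s => s.2.unit
      invFun := fun u => ⟨u, u.isUnit⟩
      left_inv := fun s => Subtype.ext s.2.unit_spec
      right_inv := fun u => Units.ext u.isUnit.unit_spec }
  rw [Nat.card_congr Eu, Nat.card_eq_fintype_card, ZMod.card_units_eq_totient]
  congr 1
  rw [Nat.card_eq_fintype_card, Fintype.card_fun, ZMod.card]
  congr 1
  have : Fintype.card {q : Q // q ≠ q₀} = Fintype.card Q - Fintype.card {q : Q // q = q₀} :=
    Fintype.card_subtype_compl _
  rw [this, Fintype.card_subtype_eq]


end CFR

/-- Theorem (the counting theorem, regular case): if `|S| = m ≥ 2` and `τ` is a `d`-regular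
permutation of `S` for a divisor `d` of `m`, then the number of permutations `σ` of `S` that
are a single cycle of length `m` on `S` and commute with `τ` (i.e. `τ ∘ σ ∘ τ⁻¹ = σ`) is
`φ(d) · (m/d − 1)! · d^(m/d − 1)`. -/
theorem card_fixed_rotations_of_regular {α : Type*} [Fintype α] [DecidableEq α]
    (m d : ℕ) (hm : 2 ≤ m) (hcard : Fintype.card α = m) (hd : d ∣ m)
    (τ : Equiv.Perm α) (hτ : IsRegularPerm τ d) :
    ({σ : Equiv.Perm α | σ.IsCycleOn (Set.univ : Set α) ∧ τ * σ * τ⁻¹ = σ}).ncard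
      = Nat.totient d * Nat.factorial (m / d - 1) * d ^ (m / d - 1) := by
  classical
  have hper : ∀ x : α, Function.minimalPeriod (⇑τ) x = d := fun x => by
    rw [← CFR.orbitLen_eq_minimalPeriod]; exact hτ x
  have hα : Nonempty α := by
    rw [← Fintype.card_pos_iff, hcard]; omega
  obtain ⟨x₀⟩ := hα
  have hd0 : 0 < d := by
    rw [← hper x₀]
    apply Function.minimalPeriod_pos_of_mem_periodicPts
    refine ⟨orderOf τ, orderOf_pos τ, ?_⟩
    show (⇑τ)^[orderOf τ] x₀ = x₀
    rw [Equiv.Perm.iterate_eq_pow, pow_orderOf_eq_one]; rfl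
  haveI : NeZero d := ⟨hd0.ne'⟩
  have h1 : τ ^ d = 1 := CFR.pow_eq_one_of_period hper
  let sc : Setoid α := ⟨τ.SameCycle,
    ⟨fun x => Equiv.Perm.SameCycle.refl τ x, fun h => h.symm, fun h h' => h.trans h'⟩⟩
  let Q := Quotient sc
  haveI : Finite Q := Quotient.finite sc
  haveI : Fintype Q := Fintype.ofFinite Q
  haveI : DecidableEq Q := Classical.decEq Q
  let fQ : Q × ZMod d → α := fun p => (τ ^ p.2.val) p.1.out
  have hfinj : Function.Injective fQ := by
    rintro ⟨q, x⟩ ⟨q', x'⟩ hf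
    simp only [fQ] at hf
    have hsc : τ.SameCycle q.out q'.out := by
      have c1 : τ.SameCycle q.out ((τ ^ x.val) q.out) :=
        ⟨(x.val : ℤ), by rw [zpow_natCast]⟩
      have c2 : τ.SameCycle q'.out ((τ ^ x'.val) q'.out) :=
        ⟨(x'.val : ℤ), by rw [zpow_natCast]⟩
      exact c1.trans (hf ▸ c2.symm)
    have hq : q = q' := by
      have h2 : Quotient.mk sc q.out = Quotient.mk sc q'.out := Quotient.sound hsc
      rwa [Quotient.out_eq, Quotient.out_eq] at h2
    subst hq
    have hval : x.val = x'.val := by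
      have hx : (⇑τ)^[x.val] q.out = (⇑τ)^[x'.val] q.out := by
        rw [Equiv.Perm.iterate_eq_pow, Equiv.Perm.iterate_eq_pow]; exact hf
      exact Function.iterate_injOn_Iio_minimalPeriod
        (by rw [Set.mem_Iio, hper]; exact ZMod.val_lt x)
        (by rw [Set.mem_Iio, hper]; exact ZMod.val_lt x') hx
    exact Prod.ext rfl (ZMod.val_injective d hval)
  have hfsurj : Function.Surjective fQ := by
    intro y
    have hsc : τ.SameCycle (Quotient.mk sc y).out y := by
      have := Quotient.exact (Quotient.out_eq (Quotient.mk sc y)); exact this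
    obtain ⟨i, -, hi⟩ := hsc.exists_pow_eq'
    refine ⟨(Quotient.mk sc y, (i : ZMod d)), ?_⟩
    show (τ ^ ((i : ZMod d)).val) _ = y
    rw [ZMod.val_natCast, ← CFR.pow_mod_eq h1, hi]
  let e : (Q × ZMod d) ≃ α := Equiv.ofBijective fQ ⟨hfinj, hfsurj⟩
  have hτ0 : (CFR.permCongrMul e) (CFR.tau0 Q d) = τ := by
    apply Equiv.ext
    intro y
    obtain ⟨⟨q, x⟩, rfl⟩ := e.surjective y
    show e ((CFR.tau0 Q d) (e.symm (e (q, x)))) = τ (e (q, x))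
    rw [Equiv.symm_apply_apply]
    show fQ (q, x + 1) = τ (fQ (q, x))
    show (τ ^ (x + 1).val) q.out = τ ((τ ^ x.val) q.out)
    have hx1 : (x + 1).val = (x.val + 1) % d := by
      have h2 : ((x.val + 1 : ℕ) : ZMod d) = x + 1 := by
        push_cast
        rw [ZMod.natCast_rightInverse]
      rw [← h2, ZMod.val_natCast]
    rw [hx1, ← CFR.pow_mod_eq h1, pow_succ', Equiv.Perm.mul_apply]
  have hc : Fintype.card Q * d = m := by
    have h2 := Fintype.card_congr e
    rwa [Fintype.card_prod, ZMod.card, hcard] at h2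
  haveI : Nonempty Q := by
    rw [← Fintype.card_pos_iff]
    rcases Nat.eq_zero_or_pos (Fintype.card Q) with h | h
    · rw [h, zero_mul] at hc; omega
    · exact h
  have hQm : Fintype.card Q = m / d := by rw [← hc, Nat.mul_div_cancel _ hd0]
  set ψ := CFR.permCongrMul e with hψ
  have key : ∀ σ' : Equiv.Perm (Q × ZMod d),
      (ψ σ' ∈ {σ : Equiv.Perm α | σ.IsCycleOn (Set.univ : Set α) ∧ τ * σ * τ⁻¹ = σ}
        ↔ σ' ∈ {σ' : Equiv.Perm (Q × ZMod d) |
            σ'.IsCycleOn (Set.univ : Set (Q × ZMod d)) ∧ Commute (CFR.tau0 Q d) σ'}) := by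
    intro σ'
    simp only [Set.mem_setOf_eq]
    constructor
    · rintro ⟨hcyc, hcm⟩
      refine ⟨CFR.isCycleOn_permCongr.mp hcyc, ?_⟩
      have h2 : τ * ψ σ' = ψ σ' * τ := by
        have h3 := congrArg (fun z => z * τ) hcm
        simpa [mul_assoc] using h3
      rw [← hτ0, ← map_mul, ← map_mul] at h2
      exact ψ.injective h2
    · rintro ⟨hcyc, hcm⟩
      refine ⟨CFR.isCycleOn_permCongr.mpr hcyc, ?_⟩
      have h2 : ψ (CFR.tau0 Q d * σ') = ψ (σ' * CFR.tau0 Q d) := by rw [hcm]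
      rw [map_mul, map_mul, hτ0] at h2
      rw [mul_inv_eq_iff_eq_mul, h2]
  have hset1 : {σ : Equiv.Perm α | σ.IsCycleOn (Set.univ : Set α) ∧ τ * σ * τ⁻¹ = σ}
      = ψ '' {σ' : Equiv.Perm (Q × ZMod d) |
          σ'.IsCycleOn (Set.univ : Set (Q × ZMod d)) ∧ Commute (CFR.tau0 Q d) σ'} := by
    ext σ
    constructor
    · intro h
      refine ⟨ψ.symm σ, ?_, ψ.apply_symm_apply σ⟩
      rw [← key]
      rw [ψ.apply_symm_apply]
      exact h
    · rintro ⟨σ', h, rfl⟩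
      exact (key σ').mpr h
  rw [hset1, Set.ncard_image_of_injective _ ψ.injective, CFR.setEq,
    Set.ncard_image_of_injective _ CFR.Fc_injective, ← Nat.card_coe_set_eq]
  have hcong : Nat.card {p : Equiv.Perm Q × (Q → ZMod d) //
        p.1.IsCycleOn (Set.univ : Set Q) ∧ IsUnit (∑ i, p.2 i)}
      = Nat.card ({π : Equiv.Perm Q // π.IsCycleOn (Set.univ : Set Q)}
          × {a : Q → ZMod d // IsUnit (∑ i, a i)}) :=
    Nat.card_congr (Equiv.subtypeProdEquivProd
      (p := fun π : Equiv.Perm Q => π.IsCycleOn (Set.univ : Set Q))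
      (q := fun a : Q → ZMod d => IsUnit (∑ i, a i)))
  show Nat.card {p : Equiv.Perm Q × (Q → ZMod d) //
      p.1.IsCycleOn (Set.univ : Set Q) ∧ IsUnit (∑ i, p.2 i)}
    = Nat.totient d * Nat.factorial (m / d - 1) * d ^ (m / d - 1)
  rw [hcong, Nat.card_prod, CFR.card_cycles, CFR.card_unit_sum, hQm]
  ring
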